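/- A finite graph G is chordal if and only if it admits a perfect elimination ordering, i.e., an enumeration v_1, ..., v_n of its vertices such that for each i, the vertex v_i is simplicial in the induced subgraph G[{v_i, v_{i+1}, ..., v_n}]. -/

import Mathlib

open SimpleGraph

/-- `f : ZMod n → V` traces an induced cycle of length `n` in `G`:
`f` is injective and adjacency holds exactly between consecutive vertices. -/
def IsInducedCycle {V : Type*} (G : SimpleGraph V) (n : ℕ) (f : ZMod n → V) : Prop :=
  Function.Injective f ∧ ∀ i j : ZMod n, G.Adj (f i) (f j) ↔ (j = i + 1 ∨ i = j + 1)

/-- A graph is chordal if it has no induced cycle of length at least 4. -/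
def Chordal {V : Type*} (G : SimpleGraph V) : Prop :=
  ∀ n, 4 ≤ n → ∀ f : ZMod n → V, ¬ IsInducedCycle G n f

/-- `G'` is a chordal completion of `G`. -/
def ChordalCompletion {V : Type*} (G G' : SimpleGraph V) : Prop :=
  Chordal G' ∧ G ≤ G'

/-- Minimal chordal completion: no proper spanning subgraph containing `G` is chordal. -/
def MinimalChordalCompletion {V : Type*} (G G' : SimpleGraph V) : Prop :=
  ChordalCompletion G G' ∧ ∀ H, ChordalCompletion G H → H ≤ G' → H = G'

section Aux
variable {V : Type*} {G : SimpleGraph V}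

lemma chordal_cycle_fun (hG : Chordal G) {n : ℕ} (hn : 4 ≤ n)
    (c : ℕ → V)
    (hinj : ∀ s < n, ∀ t < n, c s = c t → s = t)
    (hadj : ∀ s, s < n → ∀ t, t < n →
      (G.Adj (c s) (c t) ↔ (t = s + 1 ∨ s = t + 1 ∨ (s = 0 ∧ t = n-1) ∨ (t = 0 ∧ s = n-1)))) :
    False := by
  haveI : NeZero n := ⟨by omega⟩
  haveI : Fact (1 < n) := ⟨by omega⟩
  apply hG n hn (fun i => c i.val)
  constructor
  · intro i j h
    exact ZMod.val_injective n (hinj _ (ZMod.val_lt i) _ (ZMod.val_lt j) h)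
  · intro i j
    have key : ∀ a b : ZMod n, a = b + 1 ↔ a.val = if b.val = n-1 then 0 else b.val + 1 := by
      intro a b
      constructor
      · rintro rfl
        rw [ZMod.val_add, ZMod.val_one]
        have := ZMod.val_lt b
        split_ifs with h
        · have : b.val + 1 = n := by omega
          simp [this]
        · exact Nat.mod_eq_of_lt (by omega)
      · intro h
        apply ZMod.val_injective n
        rw [h, ZMod.val_add, ZMod.val_one]
        have := ZMod.val_lt b
        split_ifs with h2
        · have : b.val + 1 = n := by omega
          simp [this]
        · exact (Nat.mod_eq_of_lt (by omega)).symm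
    rw [hadj _ (ZMod.val_lt i) _ (ZMod.val_lt j), key j i, key i j]
    have hi := ZMod.val_lt i
    have hj := ZMod.val_lt j
    split_ifs <;> omega

end Aux

section Easy
variable {V : Type*} [Fintype V] {G : SimpleGraph V}

lemma chordal_of_peo
    (e : Fin (Fintype.card V) ≃ V)
    (he : ∀ i j k : Fin (Fintype.card V), i < j → i < k → j ≠ k →
      G.Adj (e i) (e j) → G.Adj (e i) (e k) → G.Adj (e j) (e k)) :
    Chordal G := by
  intro n hn f hf
  haveI : NeZero n := ⟨by omega⟩
  obtain ⟨hfinj, hfadj⟩ := hf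
  have hne : ∀ m : ℕ, 0 < m → m < n → ((m : ZMod n) ≠ 0) := by
    intro m h1 h2 h
    have := congrArg ZMod.val h
    rw [ZMod.val_natCast, ZMod.val_zero, Nat.mod_eq_of_lt h2] at this
    omega
  obtain ⟨i₀, -, hmin⟩ := Finset.exists_min_image (Finset.univ : Finset (ZMod n))
    (fun i => e.symm (f i)) Finset.univ_nonempty
  have h1 : i₀ + 1 ≠ i₀ := by
    intro h
    exact hne 1 (by omega) (by omega) (by push_cast; linear_combination h)
  have h1' : i₀ - 1 ≠ i₀ := by
    intro h
    exact hne 1 (by omega) (by omega) (by push_cast; linear_combination -h)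
  have h3 : i₀ + 1 ≠ i₀ - 1 := by
    intro h
    exact hne 2 (by omega) (by omega) (by push_cast; linear_combination h)
  have hij : e.symm (f i₀) < e.symm (f (i₀ + 1)) := by
    refine lt_of_le_of_ne (hmin _ (Finset.mem_univ _)) ?_
    intro h
    exact h1 (hfinj (e.symm.injective h).symm)
  have hik : e.symm (f i₀) < e.symm (f (i₀ - 1)) := by
    refine lt_of_le_of_ne (hmin _ (Finset.mem_univ _)) ?_
    intro h
    exact h1' (hfinj (e.symm.injective h).symm)
  have hjk : e.symm (f (i₀ + 1)) ≠ e.symm (f (i₀ - 1)) := by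
    intro h
    exact h3 (hfinj (e.symm.injective h))
  have haij : G.Adj (f i₀) (f (i₀ + 1)) := (hfadj _ _).mpr (Or.inl rfl)
  have haik : G.Adj (f i₀) (f (i₀ - 1)) := (hfadj _ _).mpr (Or.inr (by ring))
  have := he _ _ _ hij hik hjk (by simpa using haij) (by simpa using haik)
  simp only [Equiv.apply_symm_apply] at this
  rcases (hfadj _ _).mp this with h | h
  · exact hne 3 (by omega) (by omega) (by push_cast; linear_combination -h)
  · exact h1 (by linear_combination h)

end Easy

section Paths
variable {V : Type*} {G : SimpleGraph V}

/-- Reachability within a vertex set `B`. -/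
def Reach (G : SimpleGraph V) (B : Set V) (x y : V) : Prop :=
  Relation.ReflTransGen (fun u v => u ∈ B ∧ v ∈ B ∧ G.Adj u v) x y

lemma Reach.symm {B : Set V} {x y : V} (h : Reach G B x y) : Reach G B y x := by
  refine (@Relation.ReflTransGen.symmetric _ _ ⟨?_⟩).symm _ _ h
  rintro u v ⟨h1, h2, h3⟩
  exact ⟨h2, h1, h3.symm⟩

lemma Reach.trans {B : Set V} {x y z : V} (h : Reach G B x y) (h' : Reach G B y z) :
    Reach G B x z := Relation.ReflTransGen.trans h h'

/-- `c` is a walk of length `k` from `x` to `y` with interior in `B`. -/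
def PathProp (G : SimpleGraph V) (B : Set V) (c : ℕ → V) (k : ℕ) (x y : V) : Prop :=
  c 0 = x ∧ c k = y ∧ (∀ i < k, G.Adj (c i) (c (i+1))) ∧ (∀ i, 0 < i → i < k → c i ∈ B)

lemma reach_path {B : Set V} {x y : V} (h : Reach G B x y) (hx : x ∈ B) :
    ∃ k c, PathProp G B c k x y ∧ (∀ i ≤ k, c i ∈ B) := by
  induction h using Relation.ReflTransGen.head_induction_on with
  | refl =>
    exact ⟨0, fun _ => y, ⟨rfl, rfl, by omega, by omega⟩, fun i hi => by
      simpa using hx⟩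
  | head hr htail ih =>
    rename_i a c'
    obtain ⟨haB, hcB, hadj⟩ := hr
    obtain ⟨k, c, ⟨h0, hk, hchain, hint⟩, hmem⟩ := ih hcB
    refine ⟨k+1, fun i => if i = 0 then a else c (i-1), ⟨by simp, ?_, ?_, ?_⟩, ?_⟩
    · simp [hk]
    · intro i hi
      rcases Nat.eq_zero_or_pos i with rfl | hpos
      · simpa [h0] using hadj
      · have h1 : ¬ (i = 0) := by omega
        have h2 : ¬ (i + 1 = 0) := by omega
        simp only [h1, h2, if_false]
        have : i - 1 < k := by omega
        have := hchain (i-1) this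
        have he : i - 1 + 1 = i := by omega
        rwa [he] at this
    · intro i h1 h2
      simp only [Nat.pos_iff_ne_zero.mp h1, if_false]
      exact hmem (i-1) (by omega)
    · intro i hi
      rcases Nat.eq_zero_or_pos i with rfl | hpos
      · simpa using haB
      · simp only [Nat.pos_iff_ne_zero.mp hpos, if_false]
        exact hmem (i-1) (by omega)

lemma splice_gen {B : Set V} {x y : V} {c : ℕ → V} {k i g : ℕ}
    (h : PathProp G B c k x y) (hg : 0 < g) (hik : i + g ≤ k)
    (hbr : c i = c (i+g) ∨ (i + g + 1 ≤ k ∧ G.Adj (c i) (c (i+g+1)))) :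
    ∃ c', PathProp G B c' (k - g) x y := by
  obtain ⟨h0, hk, hchain, hint⟩ := h
  refine ⟨fun t => if t ≤ i then c t else c (t + g), ?_, ?_, ?_, ?_⟩
  · simp [h0]
  · dsimp only
    by_cases hL : k - g ≤ i
    · have hLi : k - g = i ∧ i + g = k := by omega
      rcases hbr with heq | ⟨hle, _⟩
      · rw [if_pos hL, hLi.1, heq, hLi.2, hk]
      · omega
    · rw [if_neg hL]
      have : k - g + g = k := by omega
      rw [this, hk]
  · intro t ht
    dsimp only
    by_cases h1 : t + 1 ≤ i
    · rw [if_pos (by omega : t ≤ i), if_pos h1]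
      exact hchain t (by omega)
    · by_cases h2 : t ≤ i
      · rw [if_pos h2, if_neg h1]
        have hti : t = i := by omega
        subst hti
        have he : t + 1 + g = t + g + 1 := by omega
        rw [he]
        rcases hbr with heq | ⟨_, hadj⟩
        · rw [heq]; exact hchain (t+g) (by omega)
        · exact hadj
      · rw [if_neg h2, if_neg h1]
        have he : t + 1 + g = t + g + 1 := by omega
        rw [he]
        exact hchain (t+g) (by omega)
  · intro t h1 h2
    dsimp only
    by_cases ht : t ≤ i
    · rw [if_pos ht]
      exact hint t h1 (by omega)
    · rw [if_neg ht]
      exact hint (t+g) (by omega) (by omega)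

/-- Shortest length walk with interior in B is an induced path. -/
lemma exists_induced_path {B : Set V} {x y : V} (hxy : x ≠ y) (hnadj : ¬ G.Adj x y)
    (hex : ∃ k c, PathProp G B c k x y) :
    ∃ k c, 2 ≤ k ∧ PathProp G B c k x y ∧
      (∀ i j, i < j → j ≤ k → c i ≠ c j) ∧
      (∀ i j, i + 1 < j → j ≤ k → ¬ G.Adj (c i) (c j)) := by
  have hexk : ∃ k, ∃ c, PathProp G B c k x y := hex
  classical
  obtain ⟨c, hc⟩ := Nat.find_spec hexk
  set k₀ := Nat.find hexk with hk₀
  have hk2 : 2 ≤ k₀ := by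
    by_contra h
    have : k₀ = 0 ∨ k₀ = 1 := by omega
    rcases this with h0 | h0 <;> rw [h0] at hc
    · exact hxy (hc.1.symm.trans hc.2.1)
    · refine hnadj ?_
      have := hc.2.2.1 0 (by omega)
      rwa [hc.1, hc.2.1] at this
  refine ⟨k₀, c, hk2, hc, ?_, ?_⟩
  · intro i j hij hjk heq
    obtain ⟨c', hc'⟩ := splice_gen hc (g := j - i) (i := i) (by omega) (by omega)
      (Or.inl (by rw [heq]; congr 1; omega))
    exact Nat.find_min hexk (show k₀ - (j-i) < k₀ by omega) ⟨c', hc'⟩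
  · intro i j hij hjk hadj
    obtain ⟨c', hc'⟩ := splice_gen hc (g := j - i - 1) (i := i) (by omega) (by omega)
      (Or.inr ⟨by omega, by
        have he : i + (j - i - 1) + 1 = j := by omega
        rw [he]; exact hadj⟩)
    exact Nat.find_min hexk (show k₀ - (j-i-1) < k₀ by omega) ⟨c', hc'⟩

end Paths

section Sep
variable {V : Type*} {G : SimpleGraph V}

lemma adj_iff_of_induced {c : ℕ → V} {k : ℕ}
    (hch : ∀ i < k, G.Adj (c i) (c (i+1)))
    (hnc : ∀ i j, i + 1 < j → j ≤ k → ¬ G.Adj (c i) (c j)) :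
    ∀ i j, i < j → j ≤ k → (G.Adj (c i) (c j) ↔ j = i + 1) := by
  intro i j hij hjk
  constructor
  · intro h
    by_contra hne
    exact hnc i j (by omega) hjk h
  · rintro rfl
    exact hch i (by omega)

lemma reach_to_side {B B' : Set V} {s a b : V}
    (hB : ∀ v ∈ B', v = s ∨ v ∈ B)
    (hsep : ¬ Reach G B a b) :
    ∀ x, Reach G B' x b → x ∈ B → Reach G B a x →
      ∃ u, u ∈ B ∧ Reach G B a u ∧ G.Adj u s := by
  intro x hxb
  induction hxb using Relation.ReflTransGen.head_induction_on with
  | refl => intro _ hab; exact absurd hab hsep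
  | head hr hrest ih =>
    rename_i p q
    intro hpB hap
    rcases hB q hr.2.1 with rfl | hqB
    · exact ⟨p, hpB, hap, hr.2.2⟩
    · exact ih hqB (hap.trans (Relation.ReflTransGen.single ⟨hpB, hqB, hr.2.2⟩))

lemma reach_comp {B : Set V} {a : V} :
    ∀ {x y : V}, Reach G B x y → Reach G B a x →
      Reach G {v | v ∈ B ∧ Reach G B a v} x y := by
  intro x y hxy
  induction hxy using Relation.ReflTransGen.head_induction_on with
  | refl => intro _; exact Relation.ReflTransGen.refl
  | head hr hrest ih =>
    rename_i p q
    intro hap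
    have haq : Reach G B a q := hap.trans (Relation.ReflTransGen.single hr)
    exact Relation.ReflTransGen.head ⟨⟨hr.1, hap⟩, ⟨hr.2.1, haq⟩, hr.2.2⟩ (ih haq)

lemma sep_clique (hG : Chordal G) {W : Set V} {S : Finset V} {a b : V}
    (hWS : ∀ v ∈ W, v ∉ S)
    (hsep : ¬ Reach G W a b)
    (hnbra : ∀ s ∈ S, ∃ u, u ∈ W ∧ Reach G W a u ∧ G.Adj u s)
    (hnbrb : ∀ s ∈ S, ∃ u, u ∈ W ∧ Reach G W b u ∧ G.Adj u s) :
    ∀ x ∈ S, ∀ y ∈ S, x ≠ y → G.Adj x y := by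
  intro x hxS y hyS hxy
  by_contra hnadj
  have hcross : ∀ u w, (u ∈ W ∧ Reach G W a u) → (w ∈ W ∧ Reach G W b w) →
      u ≠ w ∧ ¬ G.Adj u w := by
    intro u w hu hw
    constructor
    · rintro rfl
      exact hsep (hu.2.trans hw.2.symm)
    · intro hadj
      exact hsep ((hu.2.trans (Relation.ReflTransGen.single ⟨hu.1, hw.1, hadj⟩)).trans hw.2.symm)
  -- one-sided induced path construction
  have hside : ∀ (p x' y' : V), x' ∈ S → y' ∈ S → x' ≠ y' → ¬ G.Adj x' y' →
      (∀ s ∈ S, ∃ u, u ∈ W ∧ Reach G W p u ∧ G.Adj u s) →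
      ∃ k c, 2 ≤ k ∧ PathProp G {v | v ∈ W ∧ Reach G W p v} c k x' y' ∧
        (∀ i j, i < j → j ≤ k → c i ≠ c j) ∧
        (∀ i j, i + 1 < j → j ≤ k → ¬ G.Adj (c i) (c j)) := by
    intro p x' y' hx'S hy'S hx'y' hnadj' hnbr
    obtain ⟨u, huW, hpu, hux⟩ := hnbr x' hx'S
    obtain ⟨w, hwW, hpw, hwy⟩ := hnbr y' hy'S
    have huw : Reach G {v | v ∈ W ∧ Reach G W p v} u w :=
      reach_comp (hpu.symm.trans hpw) hpu
    obtain ⟨k, c, ⟨h0, hk, hch, _⟩, hmem⟩ := reach_path huw ⟨huW, hpu⟩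
    apply exists_induced_path hx'y' hnadj'
    refine ⟨k+2, fun t => if t = 0 then x' else if t ≤ k+1 then c (t-1) else y',
      ?_, ?_, ?_, ?_⟩
    · simp
    · have h1 : ¬ (k+2 = 0) := by omega
      have h2 : ¬ (k+2 ≤ k+1) := by omega
      simp only [h1, h2, if_false]
    · intro i hi
      dsimp only
      rcases Nat.eq_zero_or_pos i with rfl | hpos
      · rw [if_pos rfl, if_neg (by omega : ¬ (0+1 = 0)), if_pos (by omega), h0]
        exact hux.symm
      · rw [if_neg (by omega : ¬ (i = 0)), if_neg (by omega : ¬ (i+1 = 0)),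
          if_pos (by omega : i ≤ k + 1)]
        by_cases hik : i ≤ k
        · rw [if_pos (by omega : i + 1 ≤ k + 1)]
          have := hch (i-1) (by omega)
          have he : i - 1 + 1 = i := by omega
          rwa [he] at this
        · have hik' : i = k + 1 := by omega
          rw [if_neg (by omega : ¬ (i + 1 ≤ k + 1)), hik']
          have he : k + 1 - 1 = k := by omega
          rw [he, hk]
          exact hwy
    · intro i h1 h2
      dsimp only
      rw [if_neg (by omega : ¬ (i = 0)), if_pos (by omega : i ≤ k + 1)]
      exact hmem (i-1) (by omega)
  obtain ⟨k, c, hk2, ⟨hc0, hck, hcch, hcint⟩, hcinj, hcnc⟩ :=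
    hside a x y hxS hyS hxy hnadj hnbra
  obtain ⟨m, d, hm2, ⟨hd0, hdm, hdch, hdint⟩, hdinj, hdnc⟩ :=
    hside b y x hyS hxS hxy.symm (fun h => hnadj h.symm) hnbrb
  set cyc : ℕ → V := fun t => if t ≤ k then c t else d (t - k) with hcycdef
  have cyc_le : ∀ {t}, t ≤ k → cyc t = c t := by
    intro t h; rw [hcycdef]; dsimp only; rw [if_pos h]
  have cyc_gt : ∀ {t}, k < t → cyc t = d (t - k) := by
    intro t h; rw [hcycdef]; dsimp only; rw [if_neg (by omega)]
  have hcAa : ∀ i, 0 < i → i < k → (c i ∈ W ∧ Reach G W a (c i)) := fun i h1 h2 =>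
    hcint i h1 h2
  have hdAb : ∀ i, 0 < i → i < m → (d i ∈ W ∧ Reach G W b (d i)) := fun i h1 h2 =>
    hdint i h1 h2
  have hxW : ∀ {v : V}, v ∈ S → ¬ (v ∈ W ∧ Reach G W b v) := fun hv h => hWS _ h.1 hv
  have hxW' : ∀ {v : V}, v ∈ S → ¬ (v ∈ W ∧ Reach G W a v) := fun hv h => hWS _ h.1 hv
  have hinj2 : ∀ s t, s ≤ t → t < k + m → cyc s = cyc t → s = t := by
    intro s t hst htn heq
    by_contra hne
    have hst' : s < t := by omega
    by_cases htk : t ≤ k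
    · rw [cyc_le (t := s) (by omega), cyc_le (t := t) htk] at heq
      exact hcinj s t hst' htk heq
    · rw [cyc_gt (t := t) (by omega)] at heq
      have hrt1 : 0 < t - k := by omega
      have hrt2 : t - k < m := by omega
      by_cases hsk : s ≤ k
      · rw [cyc_le (t := s) hsk] at heq
        rcases Nat.eq_zero_or_pos s with rfl | hs0
        · rw [hc0] at heq
          exact hxW hxS (heq ▸ hdAb _ hrt1 hrt2)
        · by_cases hskk : s < k
          · exact (hcross _ _ (hcAa s hs0 hskk) (hdAb _ hrt1 hrt2)).1 heq
          · have hsk' : s = k := by omega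
            rw [hsk', hck, ← hd0] at heq
            exact hdinj 0 (t-k) hrt1 (by omega) heq
      · rw [cyc_gt (t := s) (by omega)] at heq
        have := hdinj (s-k) (t-k) (by omega) (by omega) heq
        exact this
  have hadj2 : ∀ s t, s ≤ t → t < k + m →
      (G.Adj (cyc s) (cyc t) ↔
        (t = s+1 ∨ s = t+1 ∨ (s = 0 ∧ t = (k+m)-1) ∨ (t = 0 ∧ s = (k+m)-1))) := by
    intro s t hst htn
    rcases eq_or_lt_of_le hst with rfl | hlt
    · constructor
      · intro h; exact absurd h (G.irrefl)
      · intro h; exfalso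
        rcases h with h | h | h | h <;> omega
    · by_cases htk : t ≤ k
      · rw [cyc_le (t := s) (by omega), cyc_le (t := t) htk,
          adj_iff_of_induced hcch hcnc s t hlt htk]
        omega
      · by_cases hsk : s ≤ k
        · rw [cyc_le (t := s) hsk, cyc_gt (t := t) (by omega)]
          have hrt1 : 0 < t - k := by omega
          have hrt2 : t - k < m := by omega
          rcases Nat.eq_zero_or_pos s with rfl | hs0
          · rw [hc0, ← hdm]
            rw [SimpleGraph.adj_comm,
              adj_iff_of_induced hdch hdnc (t-k) m hrt2 (le_refl m)]
            omega
          · by_cases hskk : s < k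
            · constructor
              · intro h
                exact absurd h (hcross _ _ (hcAa s hs0 hskk) (hdAb _ hrt1 hrt2)).2
              · intro h; exfalso
                rcases h with h | h | h | h <;> omega
            · have hsk' : s = k := by omega
              rw [hsk', hck, ← hd0,
                adj_iff_of_induced hdch hdnc 0 (t-k) hrt1 (by omega)]
              omega
        · rw [cyc_gt (t := s) (by omega), cyc_gt (t := t) (by omega),
            adj_iff_of_induced hdch hdnc (s-k) (t-k) (by omega) (by omega)]
          omega
  apply chordal_cycle_fun hG (show 4 ≤ k + m by omega) cyc
  · intro s hs t ht heq
    rcases le_total s t with h | h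
    · exact hinj2 s t h ht heq
    · exact (hinj2 t s h hs heq.symm).symm
  · intro s hs t ht
    rcases le_total s t with h | h
    · exact hadj2 s t h ht
    · rw [SimpleGraph.adj_comm, hadj2 t s h hs]
      tauto

end Sep

section Dirac
variable {V : Type*} {G : SimpleGraph V}

/-- `v` is simplicial in `G[A]`. -/
def SimpAt (G : SimpleGraph V) (A : Set V) (v : V) : Prop :=
  ∀ x ∈ A, ∀ y ∈ A, G.Adj v x → G.Adj v y → x ≠ y → G.Adj x y

lemma side_simp [DecidableEq V] {A S : Finset V} {a b : V}
    (haA : a ∈ A) (hbA : b ∈ A) (haS : a ∉ S) (hbS : b ∉ S) (hSA : S ⊆ A)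
    (hsep : ¬ Reach G (↑A \ ↑S) a b)
    (hScl : ∀ x ∈ S, ∀ y ∈ S, x ≠ y → G.Adj x y)
    (ih : ∀ B ⊂ A, (∀ x ∈ B, ∀ y ∈ B, x ≠ y → G.Adj x y) ∨
      ∃ u ∈ B, ∃ v ∈ B, ¬ G.Adj u v ∧ u ≠ v ∧ SimpAt G ↑B u ∧ SimpAt G ↑B v) :
    ∃ u, (u ∈ (↑A \ ↑S : Set V) ∧ Reach G (↑A \ ↑S) a u) ∧ SimpAt G ↑A u := by
  classical
  set W : Set V := ↑A \ ↑S with hW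
  set A₁ : Finset V := S ∪ A.filter (fun v => v ∈ W ∧ Reach G W a v) with hA₁
  have hmem₁ : ∀ v, v ∈ A₁ ↔ v ∈ S ∨ (v ∈ A ∧ v ∈ W ∧ Reach G W a v) := by
    intro v
    simp [hA₁, Finset.mem_union, Finset.mem_filter]
  have haW : a ∈ W := ⟨Finset.mem_coe.mpr haA, fun h => haS (Finset.mem_coe.mp h)⟩
  have haA₁ : a ∈ A₁ := (hmem₁ a).mpr (Or.inr ⟨haA, haW, Relation.ReflTransGen.refl⟩)
  have hbA₁ : b ∉ A₁ := by
    rw [hmem₁]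
    rintro (h | ⟨_, hbW, hrab⟩)
    · exact hbS h
    · exact hsep hrab
  have hsub : A₁ ⊆ A := by
    rw [hA₁]
    apply Finset.union_subset hSA (Finset.filter_subset _ _)
  have hss : A₁ ⊂ A := (Finset.ssubset_iff_of_subset hsub).mpr ⟨b, hbA, hbA₁⟩
  have hclosure : ∀ u, u ∈ W → Reach G W a u → ∀ w ∈ A, G.Adj u w → w ∈ A₁ := by
    intro u huW hrau w hwA hadj
    by_cases hwS : w ∈ S
    · exact (hmem₁ w).mpr (Or.inl hwS)
    · have hwW : w ∈ W := ⟨Finset.mem_coe.mpr hwA, fun h => hwS (Finset.mem_coe.mp h)⟩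
      exact (hmem₁ w).mpr (Or.inr ⟨hwA,
        hwW, hrau.trans (Relation.ReflTransGen.single ⟨huW, hwW, hadj⟩)⟩)
  have key : ∀ w, w ∈ A₁ → w ∉ S → SimpAt G ↑A₁ w →
      (w ∈ W ∧ Reach G W a w) ∧ SimpAt G ↑A w := by
    intro w hwA₁ hwS hsw
    obtain ⟨hwA, hwW, hraw⟩ := ((hmem₁ w).mp hwA₁).resolve_left hwS
    refine ⟨⟨hwW, hraw⟩, ?_⟩
    intro x hx y hy hwx hwy hne
    have hx₁ : x ∈ A₁ := hclosure w hwW hraw x (Finset.mem_coe.mp hx) hwx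
    have hy₁ : y ∈ A₁ := hclosure w hwW hraw y (Finset.mem_coe.mp hy) hwy
    exact hsw x (Finset.mem_coe.mpr hx₁) y (Finset.mem_coe.mpr hy₁) hwx hwy hne
  rcases ih A₁ hss with hcl | ⟨u, huA₁, v, hvA₁, hnadjuv, hneuv, hsu, hsv⟩
  · refine ⟨a, ⟨haW, Relation.ReflTransGen.refl⟩, ?_⟩
    intro x hx y hy hax hay hne
    have hx₁ := hclosure a haW Relation.ReflTransGen.refl x (Finset.mem_coe.mp hx) hax
    have hy₁ := hclosure a haW Relation.ReflTransGen.refl y (Finset.mem_coe.mp hy) hay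
    exact hcl x hx₁ y hy₁ hne
  · by_cases huS : u ∈ S
    · have hvS : v ∉ S := fun hvS => hnadjuv (hScl u huS v hvS hneuv)
      obtain ⟨h1, h2⟩ := key v hvA₁ hvS hsv
      exact ⟨v, h1, h2⟩
    · obtain ⟨h1, h2⟩ := key u huA₁ huS hsu
      exact ⟨u, h1, h2⟩

lemma dirac [DecidableEq V] (hG : Chordal G) (A : Finset V) :
    (∀ x ∈ A, ∀ y ∈ A, x ≠ y → G.Adj x y) ∨
      ∃ u ∈ A, ∃ v ∈ A, ¬ G.Adj u v ∧ u ≠ v ∧ SimpAt G ↑A u ∧ SimpAt G ↑A v := by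
  induction A using Finset.strongInduction with
  | _ A ih =>
  by_cases hcl : ∀ x ∈ A, ∀ y ∈ A, x ≠ y → G.Adj x y
  · exact Or.inl hcl
  right
  push_neg at hcl
  obtain ⟨a, haA, b, hbA, hab, hnadj⟩ := hcl
  classical
  have hbase : ¬ Reach G (↑A \ ↑(A \ ({a,b} : Finset V))) a b := by
    intro h
    have hsub : (↑A \ ↑(A \ ({a,b} : Finset V)) : Set V) ⊆ {a, b} := by
      intro v hv
      obtain ⟨hv1, hv2⟩ := hv
      by_contra hvab
      apply hv2
      rw [Finset.mem_coe, Finset.mem_sdiff]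
      refine ⟨Finset.mem_coe.mp hv1, ?_⟩
      intro hmem
      apply hvab
      rcases Finset.mem_insert.mp hmem with rfl | hb
      · exact Set.mem_insert _ _
      · rw [Finset.mem_singleton] at hb
        exact hb ▸ Set.mem_insert_of_mem _ rfl
    rcases Relation.ReflTransGen.cases_head h with heq | ⟨c, hr, _⟩
    · exact hab heq
    · rcases hsub hr.2.1 with rfl | hc
      · exact G.irrefl hr.2.2
      · rw [Set.mem_singleton_iff] at hc
        subst hc
        exact hnadj hr.2.2
  have hfin : ((A \ ({a,b} : Finset V)).powerset.filter
      (fun S : Finset V => ¬ Reach G (↑A \ ↑S) a b)).Nonempty :=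
    ⟨A \ {a,b}, Finset.mem_filter.mpr ⟨Finset.mem_powerset.mpr le_rfl, hbase⟩⟩
  obtain ⟨S, hSmem, hSmin⟩ := Finset.exists_min_image _ Finset.card hfin
  rw [Finset.mem_filter, Finset.mem_powerset] at hSmem
  obtain ⟨hSsub, hSsep⟩ := hSmem
  have haS : a ∉ S := by
    intro h
    have := hSsub h
    rw [Finset.mem_sdiff] at this
    exact this.2 (Finset.mem_insert_self _ _)
  have hbS : b ∉ S := by
    intro h
    have := hSsub h
    rw [Finset.mem_sdiff] at this
    exact this.2 (Finset.mem_insert_of_mem (Finset.mem_singleton_self _))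
  have hSA : S ⊆ A := hSsub.trans (Finset.sdiff_subset)
  have hmin : ∀ s ∈ S, Reach G (↑A \ ↑(S.erase s)) a b := by
    intro s hsS
    by_contra h
    have hmem : S.erase s ∈ (A \ ({a,b} : Finset V)).powerset.filter
        (fun S : Finset V => ¬ Reach G (↑A \ ↑S) a b) :=
      Finset.mem_filter.mpr ⟨Finset.mem_powerset.mpr
        ((Finset.erase_subset _ _).trans hSsub), h⟩
    have h1 := hSmin _ hmem
    have h2 := Finset.card_erase_of_mem hsS
    have h3 : 0 < S.card := Finset.card_pos.mpr ⟨s, hsS⟩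
    omega
  have hBsub : ∀ s, ∀ v ∈ (↑A \ ↑(S.erase s) : Set V), v = s ∨ v ∈ (↑A \ ↑S : Set V) := by
    intro s v hv
    by_cases hvs : v = s
    · exact Or.inl hvs
    · refine Or.inr ⟨hv.1, ?_⟩
      intro hvS
      exact hv.2 (Finset.mem_coe.mpr (Finset.mem_erase.mpr ⟨hvs, Finset.mem_coe.mp hvS⟩))
  have haW : a ∈ (↑A \ ↑S : Set V) := ⟨Finset.mem_coe.mpr haA, fun h => haS (Finset.mem_coe.mp h)⟩
  have hbW : b ∈ (↑A \ ↑S : Set V) := ⟨Finset.mem_coe.mpr hbA, fun h => hbS (Finset.mem_coe.mp h)⟩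
  have hnbra : ∀ s ∈ S, ∃ u, u ∈ (↑A \ ↑S : Set V) ∧ Reach G (↑A \ ↑S) a u ∧ G.Adj u s := by
    intro s hsS
    exact reach_to_side (hBsub s) hSsep a (hmin s hsS) haW Relation.ReflTransGen.refl
  have hnbrb : ∀ s ∈ S, ∃ u, u ∈ (↑A \ ↑S : Set V) ∧ Reach G (↑A \ ↑S) b u ∧ G.Adj u s := by
    intro s hsS
    exact reach_to_side (hBsub s) (fun h => hSsep h.symm) b (hmin s hsS).symm hbW
      Relation.ReflTransGen.refl
  have hScl : ∀ x ∈ S, ∀ y ∈ S, x ≠ y → G.Adj x y :=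
    sep_clique hG (fun v hv => fun h => hv.2 (Finset.mem_coe.mpr h)) hSsep hnbra hnbrb
  obtain ⟨u, ⟨huW, hau⟩, hsu⟩ := side_simp haA hbA haS hbS hSA hSsep hScl ih
  obtain ⟨v, ⟨hvW, hbv⟩, hsv⟩ := side_simp hbA haA hbS haS hSA
    (fun h => hSsep h.symm) hScl ih
  refine ⟨u, Finset.mem_coe.mp huW.1, v, Finset.mem_coe.mp hvW.1, ?_, ?_, hsu, hsv⟩
  · intro hadj
    exact hSsep ((hau.trans (Relation.ReflTransGen.single ⟨huW, hvW, hadj⟩)).trans hbv.symm)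
  · rintro rfl
    exact hSsep (hau.trans hbv.symm)

lemma exists_simpAt [DecidableEq V] (hG : Chordal G) {A : Finset V} (hA : A.Nonempty) :
    ∃ v ∈ A, SimpAt G ↑A v := by
  rcases dirac hG A with hcl | ⟨u, huA, _, _, _, _, hsu, _⟩
  · obtain ⟨v, hv⟩ := hA
    exact ⟨v, hv, fun x hx y hy _ _ hne => hcl x hx y hy hne⟩
  · exact ⟨u, huA, hsu⟩

end Dirac

section PEO
variable {V : Type*} {G : SimpleGraph V}

lemma exists_peoList [DecidableEq V] (hG : Chordal G) (A : Finset V) :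
    ∃ l : List V, l.Nodup ∧ l.toFinset = A ∧
      ∀ i (h : i < l.length), SimpAt G ↑(l.drop i).toFinset l[i] := by
  induction A using Finset.strongInduction with
  | _ A ih =>
  rcases A.eq_empty_or_nonempty with rfl | hA
  · exact ⟨[], by simp, by simp, by intro i h; simp at h⟩
  obtain ⟨v, hvA, hsv⟩ := exists_simpAt hG hA
  obtain ⟨l, hnd, htf, hsimp⟩ := ih (A.erase v) (Finset.erase_ssubset hvA)
  have hvl : v ∉ l := by
    rw [← List.mem_toFinset, htf]
    simp
  refine ⟨v :: l, List.nodup_cons.mpr ⟨hvl, hnd⟩, ?_, ?_⟩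
  · rw [List.toFinset_cons, htf, Finset.insert_erase hvA]
  · intro i h
    cases i with
    | zero =>
      have htf2 : (v :: l).toFinset = A := by
        rw [List.toFinset_cons, htf, Finset.insert_erase hvA]
      simp only [List.drop_zero, List.getElem_cons_zero, htf2]
      exact hsv
    | succ i =>
      simp only [List.drop_succ_cons, List.getElem_cons_succ]
      exact hsimp i (by simpa using h)

end PEO


theorem stmt_16 {V : Type*} [Fintype V] (G : SimpleGraph V) :
    Chordal G ↔
      ∃ e : Fin (Fintype.card V) ≃ V,
        ∀ i j k : Fin (Fintype.card V), i < j → i < k → j ≠ k →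
          G.Adj (e i) (e j) → G.Adj (e i) (e k) → G.Adj (e j) (e k) := by
  classical
  constructor
  · intro hG
    obtain ⟨l, hnd, htf, hsimp⟩ := exists_peoList hG Finset.univ
    have hmem : ∀ x, x ∈ l := by
      intro x
      rw [← List.mem_toFinset, htf]
      exact Finset.mem_univ x
    have hlen : l.length = Fintype.card V := by
      rw [← Finset.card_univ, ← htf, List.toFinset_card_of_nodup hnd]
    set e0 := List.Nodup.getEquivOfForallMemList l hnd hmem with he0
    refine ⟨(finCongr hlen.symm).trans e0, ?_⟩
    intro i j k hij hik hjk hadj1 hadj2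
    have heval : ∀ m : Fin (Fintype.card V),
        ((finCongr hlen.symm).trans e0) m = l[(m : ℕ)]'(by rw [hlen]; exact m.2) := by
      intro m
      rfl
    rw [heval i, heval j] at hadj1
    rw [heval i, heval k] at hadj2
    rw [heval j, heval k]
    have hi : (i : ℕ) < l.length := by rw [hlen]; exact i.2
    have hgetmem : ∀ m : Fin (Fintype.card V), (i : ℕ) < (m : ℕ) →
        l[(m : ℕ)]'(by rw [hlen]; exact m.2) ∈ ↑(l.drop (i : ℕ)).toFinset := by
      intro m him
      have hm : (m : ℕ) < l.length := by rw [hlen]; exact m.2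
      simp only [Finset.mem_coe, List.mem_toFinset]
      have hlt : (m : ℕ) - (i : ℕ) < (l.drop (i : ℕ)).length := by
        rw [List.length_drop]; omega
      have : (l.drop (i : ℕ))[(m : ℕ) - (i : ℕ)]'hlt = l[(m : ℕ)]'(by rw [hlen]; exact m.2) := by
        rw [List.getElem_drop]
        congr 1
        omega
      rw [← this]
      exact List.getElem_mem _
    have hne : l[(j : ℕ)]'(by rw [hlen]; exact j.2) ≠ l[(k : ℕ)]'(by rw [hlen]; exact k.2) := by
      intro h
      apply hjk
      have := hnd.getElem_inj_iff.mp h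
      exact Fin.ext this
    exact hsimp (i : ℕ) hi _ (hgetmem j hij) _ (hgetmem k hik) hadj1 hadj2 hne
  · rintro ⟨e, he⟩
    exact chordal_of_peo e he
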